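/- Let Z be a real random variable with E Z = 0, E Z² = 1 and ‖Z‖_{ψ₂} ≤ K. Let g ~ Normal(0,1) and r be independent of g with r² = (2L)²·Bernoulli((2L)^{-2}), where L² = K² log K. Then there is an absolute constant C such that for all real t, E exp(tZ) ≤ E exp(C t r g). -/

import Mathlib

open MeasureTheory ProbabilityTheory

/-- The ψ_α (Orlicz) norm of a real random variable, with the convention `sInf ∅ = ∞`. -/
noncomputable def psiNorm {Ω : Type*} [MeasurableSpace Ω] (μ : Measure Ω) (α : ℝ)
    (X : Ω → ℝ) : ENNReal :=
  sInf {t : ENNReal | ∃ s : ℝ, 0 < s ∧ t = ENNReal.ofReal s ∧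
    (∫⁻ ω, ENNReal.ofReal (Real.exp (|X ω| ^ α / s ^ α)) ∂μ) ≤ 2}

set_option maxHeartbeats 1000000

open Real
open scoped ENNReal NNReal


lemma aux_exp_taylor (x : ℝ) : exp x ≤ 1 + x + x^2 * exp |x| := by
  rcases le_or_gt 0 x with hx | hx
  · rw [abs_of_nonneg hx]
    have h1 := add_one_le_exp (x/2)
    have hu : 0 < exp (x/2) := exp_pos _
    have hx2 : exp x = exp (x/2) * exp (x/2) := by rw [← exp_add]; ring_nf
    set u := exp (x/2) with hudef
    rw [hx2]
    have hu1 : 1 ≤ u := by rw [hudef]; exact one_le_exp (by positivity)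
    have h2' : u * (1 - x/2) ≤ 1 := by
      have h2 := add_one_le_exp (-(x/2))
      have hie : exp (-(x/2)) * u = 1 := by rw [hudef, ← exp_add]; simp
      nlinarith [exp_pos (-(x/2))]
    nlinarith [sq_nonneg (u - 1), sq_nonneg x, mul_pos hu hu]
  · rw [abs_of_neg hx]
    have key : exp x ≤ 1 + x + x^2 := by
      have h1 : 1 - x ≤ exp (-x) := by nlinarith [add_one_le_exp (-x)]
      have h2 : exp x * exp (-x) = 1 := by rw [← exp_add]; simp
      have hq : (0:ℝ) < 1 + x + x^2 := by nlinarith [sq_nonneg (1 + 2*x)]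
      nlinarith [exp_pos x, exp_pos (-x)]
    have : (1:ℝ) ≤ exp (-x) := one_le_exp (by linarith)
    nlinarith [sq_nonneg x]

lemma aux_exp_sinh {v : ℝ} (hv : 0 ≤ v) : v * exp (v/2) ≤ exp v - 1 := by
  rcases eq_or_lt_of_le hv with h | h
  · simp [← h]
  · have hs : v/2 < Real.sinh (v/2) := Real.self_lt_sinh_iff.2 (by positivity)
    rw [Real.sinh_eq] at hs
    have hx2 : exp v = exp (v/2) * exp (v/2) := by rw [← exp_add]; ring_nf
    have hne : exp (-(v/2)) * exp (v/2) = 1 := by rw [← exp_add]; simp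
    nlinarith [exp_pos (v/2), exp_pos (-(v/2))]

lemma aux_le_exp_quarter (x : ℝ) : x ≤ 4 * exp (x/4) := by
  nlinarith [add_one_le_exp (x/4), exp_pos (x/4)]

lemma mgf_bound {Ω : Type} [MeasurableSpace Ω] (μ : Measure Ω) [IsProbabilityMeasure μ]
    (Z : Ω → ℝ) (hZm : Measurable Z) (s L t : ℝ)
    (hs1 : 1 ≤ s) (hL : 0 ≤ L) (hsL : s^2 ≤ 64 * L^2)
    (hlamL2 : 4 * s^2 * Real.log (8*s^2) ≤ 1024 * L^2)
    (hint : ∫⁻ ω, ENNReal.ofReal (Real.exp (Z ω^2 / s^2)) ∂μ ≤ 2)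
    (hZint : Integrable Z μ) (hmean : ∫ ω, Z ω ∂μ = 0) (hsq : ∫ ω, Z ω^2 ∂μ = 1) :
    ∫⁻ ω, ENNReal.ofReal (Real.exp (t * Z ω)) ∂μ
      ≤ ENNReal.ofReal (1 + exp 260 * t^2 * exp (exp 260 * (t^2*L^2))) := by
  have hs0 : 0 < s := lt_of_lt_of_le one_pos hs1
  have hs2 : (0:ℝ) < s^2 := by positivity
  set E : Ω → ℝ := fun ω => exp (Z ω^2 / s^2) with hEdef
  have hEm : Measurable E := (Measurable.div (hZm.pow_const 2) measurable_const).exp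
  have hEnn : ∀ ω, 0 ≤ E ω := fun ω => (exp_pos _).le
  have hEint : Integrable E μ := by
    refine ⟨hEm.aestronglyMeasurable, ?_⟩
    rw [hasFiniteIntegral_iff_ofReal (ae_of_all _ hEnn)]
    exact lt_of_le_of_lt hint (by norm_num)
  have hEval : ∫ ω, E ω ∂μ ≤ 2 := by
    have h1 : ∫ ω, E ω ∂μ = (∫⁻ ω, ENNReal.ofReal (E ω) ∂μ).toReal :=
      integral_eq_lintegral_of_nonneg_ae (ae_of_all _ hEnn) hEm.aestronglyMeasurable
    rw [h1]
    calc (∫⁻ ω, ENNReal.ofReal (E ω) ∂μ).toReal ≤ (2:ENNReal).toReal :=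
          ENNReal.toReal_mono (by norm_num) hint
      _ = 2 := by norm_num
  have hZ2le : ∀ ω, Z ω^2 ≤ s^2 * E ω := by
    intro ω
    rw [hEdef]
    have h1 : Z ω^2 / s^2 ≤ exp (Z ω^2 / s^2) := by
      nlinarith [add_one_le_exp (Z ω^2 / s^2)]
    calc Z ω^2 = s^2 * (Z ω^2 / s^2) := by field_simp
      _ ≤ s^2 * exp (Z ω^2/s^2) := by nlinarith
  have hZ2int : Integrable (fun ω => Z ω^2) μ := by
    refine Integrable.mono' (hEint.const_mul (s^2)) (hZm.pow_const 2).aestronglyMeasurable ?_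
    exact ae_of_all _ fun ω => by
      rw [Real.norm_eq_abs, abs_of_nonneg (sq_nonneg _)]; exact hZ2le ω
  set W : Ω → ℝ := fun ω => Z ω^2 * exp |t * Z ω| with hWdef
  have hWm : Measurable W := (hZm.pow_const 2).mul ((measurable_const.mul hZm).abs.exp)
  have hWnn : ∀ ω, 0 ≤ W ω := fun ω => mul_nonneg (sq_nonneg _) (exp_pos _).le
  set lam : ℝ := Real.sqrt (4 * s^2 * Real.log (8*s^2)) with hlamdef
  have hlog8 : 0 < Real.log (8*s^2) := by
    apply Real.log_pos; nlinarith
  have hlamnn : 0 ≤ lam := Real.sqrt_nonneg _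
  have hlamsq : lam^2 = 4 * s^2 * Real.log (8*s^2) := by
    rw [hlamdef, Real.sq_sqrt (by positivity)]
  have hlamL : lam^2 ≤ 1024 * L^2 := by rw [hlamsq]; exact hlamL2
  have hexplam : exp (-(lam^2/(4*s^2))) = 1/(8*s^2) := by
    have : lam^2/(4*s^2) = Real.log (8*s^2) := by rw [hlamsq]; field_simp
    rw [this, Real.exp_neg, Real.exp_log (by positivity), one_div]
  have hW3 : ∀ ω, W ω ≤ 4*s^2*exp (t^2*s^2/2) * (exp (-(Z ω^2/s^2)/4) * E ω) := by
    intro ω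
    have hxnn : 0 ≤ Z ω^2/s^2 := by positivity
    set x := Z ω^2/s^2 with hxdef
    have hz2 : Z ω^2 = s^2 * x := by rw [hxdef]; field_simp
    have hab : |t * Z ω| ≤ t^2*s^2/2 + x/2 := by
      rw [abs_mul, hxdef]
      have h0 : |t| * |Z ω| ≤ (t^2*s^2 + Z ω^2/s^2)/2 := by
        have e1 : (|Z ω|/s)^2 = Z ω^2/s^2 := by rw [div_pow, sq_abs]
        have e2 : |t| * s * (|Z ω| / s) = |t| * |Z ω| := by field_simp
        nlinarith [sq_nonneg (|t| * s - |Z ω| / s), sq_abs t, e1, e2]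
      linarith
    have h1 : exp |t * Z ω| ≤ exp (t^2*s^2/2) * exp (x/2) := by
      rw [← exp_add]; exact exp_le_exp.2 hab
    have h2 : x ≤ 4 * exp (x/4) := aux_le_exp_quarter x
    have hE : E ω = exp x := by rw [hEdef]
    have hexps : exp (x/4) * (exp (t^2*s^2/2) * exp (x/2)) =
        exp (t^2*s^2/2) * (exp (-x/4) * exp x) := by
      rw [← exp_add, ← exp_add, ← exp_add, ← exp_add]; ring_nf
    have hmul : x * exp |t * Z ω| ≤ (4 * exp (x/4)) * (exp (t^2*s^2/2) * exp (x/2)) :=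
      mul_le_mul h2 h1 (exp_pos _).le (by positivity)
    have : W ω = s^2 * (x * exp |t * Z ω|) := by rw [hWdef]; simp only; rw [hz2]; ring
    rw [this, hE]
    calc s^2 * (x * exp |t*Z ω|) ≤ s^2 * ((4 * exp (x/4)) * (exp (t^2*s^2/2) * exp (x/2))) := by
          nlinarith
      _ = 4*s^2*exp (t^2*s^2/2) * (exp (-x/4) * exp x) := by rw [mul_assoc 4, hexps]; ring
  have hcW : (0:ℝ) ≤ 4*s^2*exp (t^2*s^2/2) := by positivity
  have hWleE : ∀ ω, W ω ≤ (4*s^2*exp (t^2*s^2/2)) * E ω := by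
    intro ω
    refine le_trans (hW3 ω) ?_
    have h1 : exp (-(Z ω^2/s^2)/4) ≤ 1 := by
      rw [exp_le_one_iff]
      have h0 := div_nonneg (sq_nonneg (Z ω)) hs2.le
      linarith
    refine mul_le_mul_of_nonneg_left ?_ hcW
    calc exp (-(Z ω^2/s^2)/4) * E ω ≤ 1 * E ω := mul_le_mul_of_nonneg_right h1 (hEnn ω)
      _ = E ω := one_mul _
  have hWint : Integrable W μ := by
    refine Integrable.mono' (hEint.const_mul (4*s^2*exp (t^2*s^2/2))) hWm.aestronglyMeasurable ?_
    exact ae_of_all _ fun ω => by rw [Real.norm_eq_abs, abs_of_nonneg (hWnn ω)]; exact hWleE ω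
  set S : Set Ω := {ω | |Z ω| ≤ lam} with hSdef
  have hS : MeasurableSet S := measurableSet_le hZm.abs measurable_const
  have hmain : ∫ ω in S, W ω ∂μ ≤ exp (|t| * lam) := by
    have h1 : ∫ ω in S, W ω ∂μ ≤ ∫ ω in S, exp (|t| * lam) * Z ω^2 ∂μ := by
      refine setIntegral_mono_on hWint.integrableOn
        ((hZ2int.const_mul _).integrableOn) hS ?_
      intro ω hω
      rw [hWdef]
      show Z ω^2 * exp |t * Z ω| ≤ exp (|t| * lam) * Z ω^2
      have h2 : |t * Z ω| ≤ |t| * lam := by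
        rw [abs_mul]
        exact mul_le_mul_of_nonneg_left hω (abs_nonneg t)
      have h2' := exp_le_exp.2 h2
      nlinarith [sq_nonneg (Z ω), exp_pos (|t * Z ω|)]
    rw [integral_const_mul] at h1
    have h3 : ∫ ω in S, Z ω^2 ∂μ ≤ ∫ ω, Z ω^2 ∂μ :=
      setIntegral_le_integral hZ2int (ae_of_all _ fun ω => sq_nonneg _)
    calc ∫ ω in S, W ω ∂μ ≤ exp (|t| * lam) * ∫ ω in S, Z ω^2 ∂μ := h1
      _ ≤ exp (|t| * lam) * 1 := by
          have h4 : ∫ ω in S, Z ω^2 ∂μ ≤ 1 := le_of_le_of_eq h3 hsq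
          nlinarith [exp_pos (|t| * lam)]
      _ = exp (|t| * lam) := mul_one _
  have htail : ∫ ω in Sᶜ, W ω ∂μ ≤ exp (t^2*s^2/2) := by
    have h1 : ∫ ω in Sᶜ, W ω ∂μ ≤ ∫ ω in Sᶜ, (exp (t^2*s^2/2)/2) * E ω ∂μ := by
      refine setIntegral_mono_on hWint.integrableOn
        ((hEint.const_mul _).integrableOn) hS.compl ?_
      intro ω hω
      have hω' : lam < |Z ω| := by simpa [hSdef] using hω
      have hx : lam^2/(4*s^2) ≤ (Z ω^2/s^2)/4 := by
        have hlz : lam^2 ≤ Z ω^2 := by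
          nlinarith [abs_nonneg (Z ω), sq_abs (Z ω)]
        have e : (Z ω^2/s^2)/4 = Z ω^2/(4*s^2) := by ring
        rw [e]
        gcongr
      have h2 : exp (-(Z ω^2/s^2)/4) ≤ 1/(8*s^2) := by
        rw [← hexplam]
        apply exp_le_exp.2
        rw [neg_div]
        linarith
      refine le_trans (hW3 ω) ?_
      have h4 : exp (-(Z ω^2/s^2)/4) * E ω ≤ (1/(8*s^2)) * E ω :=
        mul_le_mul_of_nonneg_right h2 (hEnn ω)
      calc 4*s^2*exp (t^2*s^2/2) * (exp (-(Z ω^2/s^2)/4) * E ω)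
          ≤ 4*s^2*exp (t^2*s^2/2) * ((1/(8*s^2)) * E ω) :=
            mul_le_mul_of_nonneg_left h4 hcW
        _ = (exp (t^2*s^2/2)/2) * E ω := by field_simp; ring
    rw [integral_const_mul] at h1
    have h3 : ∫ ω in Sᶜ, E ω ∂μ ≤ ∫ ω, E ω ∂μ :=
      setIntegral_le_integral hEint (ae_of_all _ hEnn)
    calc ∫ ω in Sᶜ, W ω ∂μ ≤ (exp (t^2*s^2/2)/2) * ∫ ω in Sᶜ, E ω ∂μ := h1
      _ ≤ (exp (t^2*s^2/2)/2) * 2 := by nlinarith [exp_pos (t^2*s^2/2)]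
      _ = exp (t^2*s^2/2) := by ring
  have hA : ∫ ω, W ω ∂μ ≤ exp (|t| * lam) + exp (t^2*s^2/2) := by
    rw [← integral_add_compl hS hWint]
    exact add_le_add hmain htail
  have hlam32 : lam ≤ 32 * L := by nlinarith
  have hb1 : |t| * lam ≤ 256 + t^2*L^2 := by
    have h1 : |t| * lam ≤ |t| * (32*L) := mul_le_mul_of_nonneg_left hlam32 (abs_nonneg t)
    have h2 : |t| * (32*L) = 32 * (|t| * L) := by ring
    have h3 : 32 * (|t| * L) ≤ 256 + (|t| * L)^2 := by nlinarith [sq_nonneg (|t| * L - 16)]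
    have h4 : (|t| * L)^2 = t^2 * L^2 := by rw [mul_pow, sq_abs]
    linarith
  have hb2 : t^2*s^2/2 ≤ 32*(t^2*L^2) := by nlinarith [sq_nonneg t]
  have hynn : (0:ℝ) ≤ t^2*L^2 := by positivity
  have hA2 : ∫ ω, W ω ∂μ ≤ exp (257 + 32*(t^2*L^2)) := by
    have e1 : exp (|t| * lam) ≤ exp (256 + 32*(t^2*L^2)) := exp_le_exp.2 (by linarith)
    have e2 : exp (t^2*s^2/2) ≤ exp (256 + 32*(t^2*L^2)) := exp_le_exp.2 (by linarith)
    have e3 : exp (257 + 32*(t^2*L^2)) = exp 1 * exp (256 + 32*(t^2*L^2)) := by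
      rw [← exp_add]; ring_nf
    have e4 : (2:ℝ) ≤ exp 1 := by nlinarith [add_one_le_exp (1:ℝ)]
    calc ∫ ω, W ω ∂μ ≤ exp (|t| * lam) + exp (t^2*s^2/2) := hA
      _ ≤ 2 * exp (256 + 32*(t^2*L^2)) := by linarith
      _ ≤ exp (257 + 32*(t^2*L^2)) := by rw [e3]; nlinarith [exp_pos (256 + 32*(t^2*L^2))]
  have hptw : ∀ ω, exp (t * Z ω) ≤ 1 + t * Z ω + t^2 * W ω := by
    intro ω
    have h := aux_exp_taylor (t * Z ω)
    have he : (t*Z ω)^2 * exp |t * Z ω| = t^2 * W ω := by rw [hWdef]; ring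
    linarith [h, le_of_eq he]
  have hexpint : Integrable (fun ω => exp (t * Z ω)) μ := by
    refine Integrable.mono' (hEint.const_mul (exp (t^2*s^2/4)))
      ((measurable_const.mul hZm).exp).aestronglyMeasurable (ae_of_all _ fun ω => ?_)
    rw [Real.norm_eq_abs, abs_of_nonneg (exp_pos _).le]
    have hab : t * Z ω ≤ t^2*s^2/4 + Z ω^2/s^2 := by
      have h0 : t * Z ω ≤ |t| * |Z ω| := by rw [← abs_mul]; exact le_abs_self _
      have e1 : (|Z ω|/s)^2 = Z ω^2/s^2 := by rw [div_pow, sq_abs]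
      have e2 : |t| * s * (|Z ω|/s) = |t| * |Z ω| := by field_simp
      nlinarith [sq_nonneg (|t| * s / 2 - |Z ω|/s), sq_abs t]
    calc exp (t*Z ω) ≤ exp (t^2*s^2/4 + Z ω^2/s^2) := exp_le_exp.2 hab
      _ = exp (t^2*s^2/4) * E ω := by rw [hEdef, ← exp_add]
  have hintegr : Integrable (fun ω => 1 + t * Z ω + t^2 * W ω) μ :=
    ((integrable_const 1).add (hZint.const_mul t)).add (hWint.const_mul (t^2))
  have hstep : ∫ ω, exp (t * Z ω) ∂μ ≤ ∫ ω, (1 + t * Z ω + t^2 * W ω) ∂μ :=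
    integral_mono hexpint hintegr hptw
  have heval : ∫ ω, (1 + t * Z ω + t^2 * W ω) ∂μ = 1 + t^2 * ∫ ω, W ω ∂μ := by
    have i1 : Integrable (fun ω => 1 + t * Z ω) μ := (integrable_const 1).add (hZint.const_mul t)
    have i0 : Integrable (fun _ : Ω => (1:ℝ)) μ := integrable_const 1
    rw [integral_add i1 (hWint.const_mul (t^2)), integral_add i0 (hZint.const_mul t),
        integral_const, integral_const_mul, integral_const_mul, hmean]
    simp [measure_univ]
  have h3 : (32:ℝ) ≤ exp 260 := by nlinarith [add_one_le_exp (260:ℝ)]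
  have h2 : exp (257 + 32*(t^2*L^2)) ≤ exp 260 * exp (exp 260 * (t^2*L^2)) := by
    rw [← exp_add]
    apply exp_le_exp.2
    nlinarith [mul_nonneg (sub_nonneg.2 h3) hynn]
  have h1 : t^2 * ∫ ω, W ω ∂μ ≤ t^2 * exp (257 + 32*(t^2*L^2)) :=
    mul_le_mul_of_nonneg_left hA2 (sq_nonneg t)
  have h4 := mul_le_mul_of_nonneg_left h2 (sq_nonneg t)
  have h5 : t^2 * (exp 260 * exp (exp 260 * (t^2*L^2))) = exp 260 * t^2 * exp (exp 260 * (t^2*L^2)) := by ring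
  rw [← ofReal_integral_eq_lintegral_ofReal hexpint (ae_of_all _ fun ω => (exp_pos _).le)]
  exact ENNReal.ofReal_le_ofReal (by linarith)



lemma gauss_lintegral_exp (a : ℝ) :
    ∫⁻ x, ENNReal.ofReal (Real.exp (a*x)) ∂(gaussianReal 0 1) = ENNReal.ofReal (Real.exp (a^2/2)) := by
  rw [gaussianReal_of_var_ne_zero 0 one_ne_zero,
    lintegral_withDensity_eq_lintegral_mul _ (measurable_gaussianPDF 0 1)
      (show Measurable fun x : ℝ => ENNReal.ofReal (rexp (a*x)) by fun_prop)]
  have hptw : ∀ x : ℝ, (gaussianPDF 0 1 * fun x => ENNReal.ofReal (rexp (a*x))) x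
      = ENNReal.ofReal (rexp (a^2/2)) * ENNReal.ofReal (gaussianPDFReal a 1 x) := by
    intro x
    simp only [Pi.mul_apply, gaussianPDF]
    rw [← ENNReal.ofReal_mul (gaussianPDFReal_nonneg 0 1 x), ← ENNReal.ofReal_mul (exp_pos _).le]
    congr 1
    simp only [gaussianPDFReal, NNReal.coe_one, mul_one, sub_zero]
    rw [mul_assoc, ← exp_add, mul_comm (rexp (a^2/2)), mul_assoc, ← exp_add]
    congr 2
    ring
  calc ∫⁻ x, (gaussianPDF 0 1 * fun x => ENNReal.ofReal (rexp (a*x))) x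
      = ∫⁻ x, ENNReal.ofReal (rexp (a^2/2)) * ENNReal.ofReal (gaussianPDFReal a 1 x) := by
        exact lintegral_congr hptw
    _ = ENNReal.ofReal (rexp (a^2/2)) * ∫⁻ x, ENNReal.ofReal (gaussianPDFReal a 1 x) :=
        lintegral_const_mul _ (measurable_gaussianPDFReal a 1).ennreal_ofReal
    _ = ENNReal.ofReal (rexp (a^2/2)) := by
        rw [lintegral_gaussianPDFReal_eq_one a one_ne_zero, mul_one]




lemma s_ge_one {Ω : Type} [MeasurableSpace Ω] (μ : Measure Ω) [IsProbabilityMeasure μ]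
    (Z : Ω → ℝ) (hZm : Measurable Z) (hsq : ∫ ω, Z ω^2 ∂μ = 1) (s : ℝ) (hs0 : 0 < s)
    (hb : (∫⁻ ω, ENNReal.ofReal (Real.exp (Z ω^2 / s^2)) ∂μ) ≤ 2) : 1 ≤ s := by
  have hs2 : (0:ℝ) < s^2 := by positivity
  set E : Ω → ℝ := fun ω => exp (Z ω^2/s^2) with hEdef
  have hEm : Measurable E := ((hZm.pow_const 2).div_const _).exp
  have hEnn : ∀ ω, 0 ≤ E ω := fun ω => (exp_pos _).le
  have hEint : Integrable E μ := ⟨hEm.aestronglyMeasurable, by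
    rw [hasFiniteIntegral_iff_ofReal (ae_of_all _ hEnn)]; exact lt_of_le_of_lt hb (by norm_num)⟩
  have hZ2le : ∀ ω, Z ω^2 ≤ s^2 * E ω := by
    intro ω
    rw [hEdef]
    have h1 : Z ω^2 / s^2 ≤ exp (Z ω^2 / s^2) := by
      nlinarith [add_one_le_exp (Z ω^2 / s^2)]
    calc Z ω^2 = s^2 * (Z ω^2 / s^2) := by field_simp
      _ ≤ s^2 * exp (Z ω^2/s^2) := by nlinarith
  have hZ2int : Integrable (fun ω => Z ω^2) μ := by
    refine Integrable.mono' (hEint.const_mul (s^2)) (hZm.pow_const 2).aestronglyMeasurable ?_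
    exact ae_of_all _ fun ω => by
      rw [Real.norm_eq_abs, abs_of_nonneg (sq_nonneg _)]; exact hZ2le ω
  have hI : ∫⁻ ω, ENNReal.ofReal (Z ω^2) ∂μ = 1 := by
    rw [← ofReal_integral_eq_lintegral_ofReal hZ2int (ae_of_all _ fun ω => sq_nonneg _), hsq,
      ENNReal.ofReal_one]
  have hptw : ∀ ω, (1 : ℝ≥0∞) + ENNReal.ofReal (1/s^2) * ENNReal.ofReal (Z ω^2)
      ≤ ENNReal.ofReal (exp (Z ω^2/s^2)) := by
    intro ω
    rw [← ENNReal.ofReal_mul (by positivity), ← ENNReal.ofReal_one,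
      ← ENNReal.ofReal_add zero_le_one (by positivity)]
    apply ENNReal.ofReal_le_ofReal
    have h1 := add_one_le_exp (Z ω^2/s^2)
    have he : 1/s^2 * Z ω^2 = Z ω^2/s^2 := by ring
    linarith [le_of_eq he]
  have hlow : (1:ℝ≥0∞) + ENNReal.ofReal (1/s^2) ≤ 2 := by
    calc (1:ℝ≥0∞) + ENNReal.ofReal (1/s^2)
        = 1 + ENNReal.ofReal (1/s^2) * ∫⁻ ω, ENNReal.ofReal (Z ω^2) ∂μ := by rw [hI, mul_one]
      _ = ∫⁻ ω, (1 + ENNReal.ofReal (1/s^2) * ENNReal.ofReal (Z ω^2)) ∂μ := by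
          rw [lintegral_add_left measurable_const,
            lintegral_const_mul _ ((hZm.pow_const 2).ennreal_ofReal), lintegral_const,
            measure_univ, mul_one]
      _ ≤ ∫⁻ ω, ENNReal.ofReal (exp (Z ω^2/s^2)) ∂μ := lintegral_mono hptw
      _ ≤ 2 := hb
  have h12 : ENNReal.ofReal (1/s^2) ≤ 1 := by
    have h2 : (2:ℝ≥0∞) = 1 + 1 := by norm_num
    rw [h2] at hlow
    exact (ENNReal.add_le_add_iff_left ENNReal.one_ne_top).1 hlow
  have h13 := ENNReal.ofReal_le_one.1 h12
  have h14 : 1 ≤ s^2 := (div_le_one hs2).1 h13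
  nlinarith [sq_nonneg (s-1), sq_nonneg (s+1)]

lemma extract_s {Ω : Type} [MeasurableSpace Ω] (μ : Measure Ω) [IsProbabilityMeasure μ]
    (Z : Ω → ℝ) (hZm : Measurable Z) (hsq : ∫ ω, Z ω^2 ∂μ = 1) (K : ℝ)
    (hpsi : psiNorm μ 2 Z ≤ ENNReal.ofReal K) :
    1 ≤ K ∧ ∃ s : ℝ, 1 ≤ s ∧ s ≤ 2*K ∧
      (∫⁻ ω, ENNReal.ofReal (Real.exp (Z ω^2 / s^2)) ∂μ) ≤ 2 := by
  have hconv : ∀ (u : ℝ), (fun ω => ENNReal.ofReal (Real.exp (|Z ω| ^ (2:ℝ) / u ^ (2:ℝ))))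
      = fun ω => ENNReal.ofReal (Real.exp (Z ω^2 / u^2)) := by
    intro u
    funext ω
    rw [Real.rpow_two, Real.rpow_two, sq_abs]
  have hmem : ∀ x ∈ {t : ENNReal | ∃ s : ℝ, 0 < s ∧ t = ENNReal.ofReal s ∧
      (∫⁻ ω, ENNReal.ofReal (Real.exp (|Z ω| ^ (2:ℝ) / s ^ (2:ℝ))) ∂μ) ≤ 2},
      ENNReal.ofReal 1 ≤ x := by
    rintro x ⟨s, hs0, rfl, hbb⟩
    rw [hconv s] at hbb
    exact ENNReal.ofReal_le_ofReal (s_ge_one μ Z hZm hsq s hs0 hbb)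
  have hK1 : 1 ≤ K := by
    have h1 : ENNReal.ofReal 1 ≤ psiNorm μ 2 Z := le_sInf hmem
    have h2 : ENNReal.ofReal 1 ≤ ENNReal.ofReal K := le_trans h1 hpsi
    rw [ENNReal.ofReal_one] at h2
    exact ENNReal.one_le_ofReal.1 h2
  refine ⟨hK1, ?_⟩
  have hlt : psiNorm μ 2 Z < ENNReal.ofReal (2*K) := by
    calc psiNorm μ 2 Z ≤ ENNReal.ofReal K := hpsi
      _ < ENNReal.ofReal (2*K) := by
        rw [ENNReal.ofReal_lt_ofReal_iff (by linarith)]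
        linarith
  obtain ⟨x, hx, hxlt⟩ := sInf_lt_iff.1 hlt
  obtain ⟨s, hs0, rfl, hbb⟩ := hx
  rw [hconv s] at hbb
  refine ⟨s, s_ge_one μ Z hZm hsq s hs0 hbb, ?_, hbb⟩
  have := (ENNReal.ofReal_lt_ofReal_iff (by linarith : (0:ℝ) < 2*K)).1 hxlt
  linarith





lemma rhs_eval {Ω : Type} [MeasurableSpace Ω] (μ : Measure Ω) [IsProbabilityMeasure μ]
    (g r : Ω → ℝ) (hgm : Measurable g) (hrm : Measurable r) (L a : ℝ) (hL : 0 < L)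
    (hmap : Measure.map g μ = gaussianReal 0 1)
    (hr2 : μ {ω | r ω ^ 2 = (2 * L) ^ 2} = ENNReal.ofReal (1 / (2 * L) ^ 2))
    (hr0 : μ {ω | r ω = 0} = 1 - ENNReal.ofReal (1 / (2 * L) ^ 2))
    (hindep : IndepFun r g μ) :
    ∫⁻ ω, ENNReal.ofReal (Real.exp (a * r ω * g ω)) ∂μ =
      (1 - ENNReal.ofReal (1 / (2 * L) ^ 2)) +
        ENNReal.ofReal (1 / (2 * L) ^ 2) * ENNReal.ofReal (Real.exp ((a*(2*L))^2/2)) := by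
  set p := ENNReal.ofReal (1 / (2*L)^2) with hpdef
  set f : Ω → ℝ≥0∞ := fun ω => ENNReal.ofReal (Real.exp (a * r ω * g ω)) with hfdef
  have hfm : Measurable f := by
    apply Measurable.ennreal_ofReal
    exact ((measurable_const.mul hrm).mul hgm).exp
  -- the key computation for a single atom c of r
  have key : ∀ c : ℝ, ∫⁻ ω in r ⁻¹' {c}, f ω ∂μ
      = μ (r ⁻¹' {c}) * ENNReal.ofReal (Real.exp ((a*c)^2/2)) := by
    intro c
    set φ : ℝ → ℝ≥0∞ := ({c} : Set ℝ).indicator (fun _ => 1) with hφdef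
    have hφm : Measurable φ := measurable_const.indicator (measurableSet_singleton c)
    set ψ : ℝ → ℝ≥0∞ := fun x => ENNReal.ofReal (Real.exp (a * c * x)) with hψdef
    have hψm : Measurable ψ := by
      apply Measurable.ennreal_ofReal
      exact (measurable_id.const_mul (a*c)).exp
    have hprod : ∀ ω, (r ⁻¹' {c}).indicator f ω = φ (r ω) * ψ (g ω) := by
      intro ω
      by_cases hω : r ω = c
      · have h1 : ω ∈ r ⁻¹' {c} := hω
        rw [Set.indicator_of_mem h1, hφdef]
        rw [Set.indicator_of_mem (by exact hω : r ω ∈ ({c} : Set ℝ))]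
        rw [one_mul, hfdef, hψdef]
        simp only
        rw [hω]
      · have h1 : ω ∉ r ⁻¹' {c} := hω
        rw [Set.indicator_of_notMem h1, hφdef]
        rw [Set.indicator_of_notMem (by exact hω : r ω ∉ ({c} : Set ℝ)), zero_mul]
    have hφr : ∫⁻ ω, φ (r ω) ∂μ = μ (r ⁻¹' {c}) := by
      have h2 : ∀ ω, φ (r ω) = (r ⁻¹' {c}).indicator (fun _ => 1) ω := by
        intro ω
        by_cases hω : r ω = c
        · rw [hφdef, Set.indicator_of_mem (by exact hω : r ω ∈ ({c} : Set ℝ)),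
            Set.indicator_of_mem (by exact hω : ω ∈ r ⁻¹' {c})]
        · rw [hφdef, Set.indicator_of_notMem (by exact hω : r ω ∉ ({c} : Set ℝ)),
            Set.indicator_of_notMem (by exact hω : ω ∉ r ⁻¹' {c})]
      rw [lintegral_congr h2, lintegral_indicator (hrm (measurableSet_singleton c))]
      exact setLIntegral_one _
    have hψg : ∫⁻ ω, ψ (g ω) ∂μ = ENNReal.ofReal (Real.exp ((a*c)^2/2)) := by
      rw [← lintegral_map hψm hgm, hmap, hψdef]
      exact gauss_lintegral_exp (a*c)
    calc ∫⁻ ω in r ⁻¹' {c}, f ω ∂μ = ∫⁻ ω, (r ⁻¹' {c}).indicator f ω ∂μ :=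
          (lintegral_indicator (hrm (measurableSet_singleton c)) f).symm
      _ = ∫⁻ ω, φ (r ω) * ψ (g ω) ∂μ := lintegral_congr hprod
      _ = (∫⁻ ω, φ (r ω) ∂μ) * ∫⁻ ω, ψ (g ω) ∂μ :=
          lintegral_mul_eq_lintegral_mul_lintegral_of_indepFun (hφm.comp hrm) (hψm.comp hgm)
            (hindep.comp hφm hψm)
      _ = μ (r ⁻¹' {c}) * ENNReal.ofReal (Real.exp ((a*c)^2/2)) := by rw [hφr, hψg]
  -- set decomposition
  set A0 : Set Ω := r ⁻¹' {0} with hA0def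
  set Ap : Set Ω := r ⁻¹' {2*L} with hApdef
  set Am : Set Ω := r ⁻¹' {-(2*L)} with hAmdef
  have hA0 : MeasurableSet A0 := hrm (measurableSet_singleton _)
  have hAp : MeasurableSet Ap := hrm (measurableSet_singleton _)
  have hAm : MeasurableSet Am := hrm (measurableSet_singleton _)
  have hA0eq : {ω | r ω = 0} = A0 := rfl
  have hunion : {ω | r ω ^ 2 = (2 * L) ^ 2} = Ap ∪ Am := by
    ext ω
    simp only [Set.mem_setOf_eq, Set.mem_union, hApdef, hAmdef, Set.mem_preimage,
      Set.mem_singleton_iff]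
    exact sq_eq_sq_iff_eq_or_eq_neg
  have hdisjpm : Disjoint Ap Am := by
    rw [Set.disjoint_left]
    intro ω h1 h2
    have e1 : r ω = 2*L := h1
    have e2 : r ω = -(2*L) := h2
    rw [e1] at e2
    linarith
  have hdisj0 : Disjoint A0 (Ap ∪ Am) := by
    rw [Set.disjoint_left]
    intro ω h1 h2
    have e1 : r ω = 0 := h1
    rcases h2 with h2 | h2
    · have e2 : r ω = 2*L := h2; rw [e1] at e2; linarith
    · have e2 : r ω = -(2*L) := h2; rw [e1] at e2; linarith
  have hμpm : μ Ap + μ Am = p := by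
    rw [← measure_union hdisjpm hAm, ← hunion, hr2]
  have hμ0 : μ A0 = 1 - p := by rw [← hA0eq] at *; exact hr0
  have hp1 : p ≤ 1 := by
    rw [← hr2]
    exact prob_le_one
  have huniv : μ (A0 ∪ (Ap ∪ Am)) = 1 := by
    rw [measure_union hdisj0 (hAp.union hAm), measure_union hdisjpm hAm, hμ0, hμpm]
    exact tsub_add_cancel_of_le hp1
  have hcompl : μ ((A0 ∪ (Ap ∪ Am))ᶜ) = 0 := by
    rw [measure_compl (hA0.union (hAp.union hAm)) (measure_ne_top μ _), huniv, measure_univ,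
      tsub_self]
  have hterm0 : ∫⁻ ω in A0, f ω ∂μ = μ A0 := by
    have h1 : ∀ᵐ ω ∂μ, ω ∈ A0 → f ω = 1 := by
      refine ae_of_all _ fun ω hω => ?_
      have e1 : r ω = 0 := hω
      rw [hfdef]
      simp only
      rw [e1]
      norm_num
    rw [setLIntegral_congr_fun_ae hA0 h1, setLIntegral_one]
  have hexpeq : ((a*(-(2*L)))^2/2) = ((a*(2*L))^2/2) := by ring
  calc ∫⁻ ω, f ω ∂μ
      = ∫⁻ ω in A0 ∪ (Ap ∪ Am), f ω ∂μ + ∫⁻ ω in (A0 ∪ (Ap ∪ Am))ᶜ, f ω ∂μ :=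
        (lintegral_add_compl f (hA0.union (hAp.union hAm))).symm
    _ = ∫⁻ ω in A0 ∪ (Ap ∪ Am), f ω ∂μ := by
        rw [setLIntegral_measure_zero _ _ hcompl, add_zero]
    _ = ∫⁻ ω in A0, f ω ∂μ + (∫⁻ ω in Ap, f ω ∂μ + ∫⁻ ω in Am, f ω ∂μ) := by
        rw [lintegral_union (hAp.union hAm) hdisj0, lintegral_union hAm hdisjpm]
    _ = μ A0 + (μ Ap * ENNReal.ofReal (Real.exp ((a*(2*L))^2/2))
          + μ Am * ENNReal.ofReal (Real.exp ((a*(2*L))^2/2))) := by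
        rw [hterm0, key (2*L), key (-(2*L)), hexpeq]
    _ = (1 - p) + p * ENNReal.ofReal (Real.exp ((a*(2*L))^2/2)) := by
        rw [hμ0, ← add_mul, hμpm]



theorem mgf_comparison_scaled_bernoulli_gaussian : ∃ C : ℝ, 0 < C ∧
    ∀ (Ω : Type) (_ : MeasurableSpace Ω) (μ : Measure Ω) (_ : IsProbabilityMeasure μ)
      (Z g r : Ω → ℝ) (K L : ℝ),
      Measurable Z → Measurable g → Measurable r →
      Integrable Z μ → (∫ ω, Z ω ∂μ) = 0 → (∫ ω, Z ω ^ 2 ∂μ) = 1 →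
      psiNorm μ 2 Z ≤ ENNReal.ofReal K →
      0 ≤ L → L ^ 2 = K ^ 2 * Real.log K →
      Measure.map g μ = gaussianReal 0 1 →
      μ {ω | r ω ^ 2 = (2 * L) ^ 2} = ENNReal.ofReal (1 / (2 * L) ^ 2) →
      μ {ω | r ω = 0} = 1 - ENNReal.ofReal (1 / (2 * L) ^ 2) →
      IndepFun r g μ →
      ∀ t : ℝ,
        (∫⁻ ω, ENNReal.ofReal (Real.exp (t * Z ω)) ∂μ) ≤
          ∫⁻ ω, ENNReal.ofReal (Real.exp (C * t * r ω * g ω)) ∂μ := by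
  refine ⟨2 * Real.exp 130, by positivity, ?_⟩
  intro Ω mΩ μ hprob Z g r K L hZm hgm hrm hZint hmean hsq hpsi hLnn hLK hmap hr2 hr0 hindep t
  obtain ⟨hK1, s, hs1, hs2K, hb⟩ := extract_s μ Z hZm hsq K hpsi
  -- L > 0
  have hL0 : 0 < L := by
    rcases eq_or_lt_of_le hLnn with h | h
    · exfalso
      rw [← h] at hr2 hr0
      have he1 : (2 * (0:ℝ))^2 = 0 := by norm_num
      rw [he1] at hr2 hr0
      have hset : {ω | r ω ^ 2 = 0} = {ω | r ω = 0} := by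
        ext ω; simp [pow_eq_zero_iff]
      rw [hset] at hr2
      rw [hr2] at hr0
      simp at hr0
    · exact h
  -- q := real Bernoulli parameter
  set q : ℝ := 1 / (2*L)^2 with hqdef
  have hq0 : 0 ≤ q := by positivity
  have hq1 : q ≤ 1 := by
    have h1 : ENNReal.ofReal (1 / (2 * L) ^ 2) ≤ 1 := hr2 ▸ prob_le_one
    exact ENNReal.ofReal_le_one.1 h1
  have hL12 : 1/2 ≤ L := by
    have h2 : 1/4 ≤ L^2 := by
      rw [hqdef] at hq1
      have h4 : (0:ℝ) < (2*L)^2 := by positivity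
      have h5 := (div_le_one h4).1 hq1
      nlinarith
    nlinarith
  have hK0 : 0 < K := lt_of_lt_of_le one_pos hK1
  have hlognn : 0 ≤ Real.log K := Real.log_nonneg hK1
  have hL2 : 1/4 ≤ L^2 := by nlinarith
  -- log K ≥ 1/16
  have hlogK : 1/16 ≤ Real.log K := by
    by_contra hc
    push_neg at hc
    have h1 : K < Real.exp (1/16) := by
      calc K = Real.exp (Real.log K) := (Real.exp_log hK0).symm
        _ < Real.exp (1/16) := Real.exp_lt_exp.2 hc
    have h2 : K^2 < Real.exp (1/8) := by
      have h3 : K^2 < Real.exp (1/16) * Real.exp (1/16) := by nlinarith [Real.exp_pos (1/16:ℝ)]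
      have h4 : Real.exp (1/16) * Real.exp ((1:ℝ)/16) = Real.exp (1/8) := by
        rw [← Real.exp_add]; norm_num
      linarith
    have h5 : Real.exp ((1:ℝ)/8) < 2 := by
      have h6 : (1:ℝ)/8 < Real.log 2 := by
        have := Real.log_two_gt_d9
        linarith
      calc Real.exp ((1:ℝ)/8) < Real.exp (Real.log 2) := Real.exp_lt_exp.2 h6
        _ = 2 := Real.exp_log two_pos
    have h7 : K^2 * Real.log K < 2 * (1/16) := by nlinarith [sq_nonneg K]
    nlinarith [hLK]
  -- numeric conditions for mgf_bound
  have hsL : s^2 ≤ 64 * L^2 := by nlinarith [hLK]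
  have hlamL2 : 4*s^2*Real.log (8*s^2) ≤ 1024 * L^2 := by
    have h8 : Real.log (8*s^2) ≤ Real.log (32*K^2) :=
      Real.log_le_log (by positivity) (by nlinarith)
    have h32 : Real.log (32*K^2) = Real.log 32 + 2 * Real.log K := by
      rw [Real.log_mul (by norm_num) (by positivity), Real.log_pow]
      norm_num
    have hlog32 : Real.log 32 ≤ 3.5 := by
      rw [show (32:ℝ) = 2^5 by norm_num, Real.log_pow]
      have := Real.log_two_lt_d9
      push_cast
      nlinarith
    have m2 : Real.log (8*s^2) ≤ 58 * Real.log K := by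
      have : (3.5:ℝ) ≤ 56 * Real.log K := by nlinarith
      linarith
    have m1 : 4*s^2 ≤ 16*K^2 := by nlinarith
    have m3 : 0 ≤ Real.log (8*s^2) := Real.log_nonneg (by nlinarith)
    calc 4*s^2*Real.log (8*s^2) ≤ 16*K^2*(58 * Real.log K) :=
          mul_le_mul m1 m2 m3 (by positivity)
      _ = 928 * (K^2 * Real.log K) := by ring
      _ = 928 * L^2 := by rw [← hLK]
      _ ≤ 1024 * L^2 := by nlinarith [sq_nonneg L]
  -- MGF bound for Z
  have hmgf := mgf_bound μ Z hZm s L t hs1 hLnn hsL hlamL2 hb hZint hmean hsq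
  -- RHS evaluation
  have hrhs := rhs_eval μ g r hgm hrm L (2 * Real.exp 130 * t) hL0 hmap hr2 hr0 hindep
  -- final real inequality
  set X : ℝ := (2 * Real.exp 130 * t*(2*L))^2/2 with hXdef
  have hX : X = 8*Real.exp 260*(t^2*L^2) := by
    rw [hXdef]
    have he : Real.exp 130 * Real.exp 130 = Real.exp 260 := by rw [← Real.exp_add]; norm_num
    have h9 : (2*Real.exp 130*t*(2*L))^2/2 = 8*(Real.exp 130*Real.exp 130)*(t^2*L^2) := by ring
    rw [h9, he]
  set v : ℝ := 8*Real.exp 260*(t^2*L^2) with hvdef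
  have hv0 : 0 ≤ v := by positivity
  have hsinh := aux_exp_sinh hv0
  have hqv : q * v = 2*Real.exp 260*t^2 := by
    rw [hqdef, hvdef]
    field_simp
    ring
  have hy0 : (0:ℝ) ≤ Real.exp 260 * (t^2*L^2) := by positivity
  have hmono : Real.exp (Real.exp 260*(t^2*L^2)) ≤ Real.exp (v/2) := by
    apply Real.exp_le_exp.2
    rw [hvdef]
    nlinarith
  have h1 : Real.exp 260 * t^2 * Real.exp (Real.exp 260*(t^2*L^2))
      ≤ 2*Real.exp 260*t^2 * Real.exp (v/2) := by
    calc Real.exp 260 * t^2 * Real.exp (Real.exp 260*(t^2*L^2))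
        ≤ Real.exp 260 * t^2 * Real.exp (v/2) :=
          mul_le_mul_of_nonneg_left hmono (by positivity)
      _ ≤ 2*Real.exp 260*t^2 * Real.exp (v/2) := by
          nlinarith [Real.exp_pos (v/2), sq_nonneg t, Real.exp_pos (260:ℝ)]
  have h2 : 2*Real.exp 260*t^2 * Real.exp (v/2) = q*(v * Real.exp (v/2)) := by
    rw [← mul_assoc, hqv]
  have h3 : q*(v*Real.exp (v/2)) ≤ q*(Real.exp v - 1) :=
    mul_le_mul_of_nonneg_left hsinh hq0
  have hreal : 1 + Real.exp 260 * t^2 * Real.exp (Real.exp 260 * (t^2*L^2))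
      ≤ (1-q) + q * Real.exp X := by
    rw [hX]
    linarith
  calc (∫⁻ ω, ENNReal.ofReal (Real.exp (t * Z ω)) ∂μ)
      ≤ ENNReal.ofReal (1 + Real.exp 260 * t^2 * Real.exp (Real.exp 260 * (t^2*L^2))) := hmgf
    _ ≤ ENNReal.ofReal ((1-q) + q * Real.exp X) := ENNReal.ofReal_le_ofReal hreal
    _ = ENNReal.ofReal (1-q) + ENNReal.ofReal (q * Real.exp X) :=
        ENNReal.ofReal_add (by linarith) (by positivity)
    _ = (1 - ENNReal.ofReal (1 / (2 * L) ^ 2))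
        + ENNReal.ofReal (1 / (2 * L) ^ 2) * ENNReal.ofReal (Real.exp X) := by
        rw [ENNReal.ofReal_sub 1 hq0, ENNReal.ofReal_one, ENNReal.ofReal_mul hq0]
    _ = ∫⁻ ω, ENNReal.ofReal (Real.exp (2 * Real.exp 130 * t * r ω * g ω)) ∂μ := hrhs.symm
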